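/- arXiv:2008.13250 — 4 statements merged into one kernel-verified Lean document; each statement's English description precedes it below -/
import Mathlib

section
/- Let A be a g-tuple of d×d real symmetric matrices with D_A bounded, and let (X_0, X) be a (g+1)-tuple of n×n real symmetric matrices with I ⊗ X_0 + Σ A_i ⊗ X_i ⪰ 0. Then ker X_0 ⊆ ker X_i for all i = 1, ..., g. -/
open Matrix
open scoped Kronecker

private lemma tensor_dot {d n : ℕ} (a c : Fin d → ℝ) (b e : Fin n → ℝ) :
    (fun pq : Fin d × Fin n => a pq.1 * b pq.2) ⬝ᵥ (fun pq => c pq.1 * e pq.2)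
      = (a ⬝ᵥ c) * (b ⬝ᵥ e) := by
  simp only [dotProduct, Fintype.sum_prod_type, Finset.sum_mul, Finset.mul_sum]
  rw [Finset.sum_comm]
  refine Finset.sum_congr rfl fun q _ => Finset.sum_congr rfl fun p _ => by ring

private lemma kron_mulVec {d n : ℕ} (B : Matrix (Fin d) (Fin d) ℝ)
    (Y : Matrix (Fin n) (Fin n) ℝ) (u : Fin d → ℝ) (w : Fin n → ℝ) :
    (B ⊗ₖ Y) *ᵥ (fun pq => u pq.1 * w pq.2)
      = fun pq => (B *ᵥ u) pq.1 * (Y *ᵥ w) pq.2 := by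
  funext pq
  obtain ⟨p, q⟩ := pq
  simp only [mulVec, dotProduct, kroneckerMap_apply, Fintype.sum_prod_type,
    Finset.sum_mul, Finset.mul_sum]
  rw [Finset.sum_comm]
  refine Finset.sum_congr rfl fun q' _ => Finset.sum_congr rfl fun p' _ => by ring

private lemma sum_mulVec' {g : ℕ} {α : Type*} [Fintype α] (M : Fin g → Matrix α α ℝ)
    (x : α → ℝ) : (∑ i, M i) *ᵥ x = ∑ i, M i *ᵥ x := by
  funext p
  simp only [mulVec, dotProduct, Matrix.sum_apply, Finset.sum_apply, Finset.sum_mul]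
  exact Finset.sum_comm

private lemma bdd_zero {g d : ℕ} (A : Fin g → Matrix (Fin d) (Fin d) ℝ)
    (C : ℝ) (hC : 0 < C)
    (hbound : ∀ (m : ℕ) (Z : Fin g → Matrix (Fin m) (Fin m) ℝ),
      (∀ i, (Z i).IsSymm) → (1 + ∑ i, A i ⊗ₖ Z i).PosSemidef →
      (C • (1 : Matrix (Fin m) (Fin m) ℝ) - ∑ i, Z i * Z i).PosSemidef)
    (b : Fin g → ℝ) (hb : (∑ i, b i • A i).PosSemidef) : b = 0 := by
  set S := ∑ i, b i • A i with hS
  have key : ∀ s : ℝ, 0 ≤ s → s ^ 2 * ∑ i, b i ^ 2 ≤ C := by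
    intro s hs
    set Z : Fin g → Matrix (Fin 1) (Fin 1) ℝ := fun i => (s * b i) • 1 with hZ
    have hZsymm : ∀ i, (Z i).IsSymm := by
      intro i
      ext p q
      obtain rfl : p = q := Subsingleton.elim p q
      simp [hZ, Matrix.transpose_apply]
    let e : Fin d × Fin 1 ≃ Fin d := Equiv.prodUnique (Fin d) (Fin 1)
    have he : ∀ pq : Fin d × Fin 1, e pq = pq.1 := fun _ => rfl
    have hZsum : ∑ i, A i ⊗ₖ Z i = (s • S).submatrix e e := by
      ext pq pq'
      obtain ⟨p, q⟩ := pq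
      obtain ⟨p', q'⟩ := pq'
      simp only [hZ, hS, Matrix.sum_apply, kroneckerMap_apply, Matrix.smul_apply,
        Matrix.submatrix_apply, Matrix.one_apply, Subsingleton.elim q q',
        he, smul_eq_mul, Finset.mul_sum]
      refine Finset.sum_congr rfl fun i _ => ?_
      simp only [if_true]
      ring
    have hSymmS : Sᵀ = S := by
      ext i j
      have h := congrFun (congrFun hb.1 i) j
      simpa [Matrix.conjTranspose_apply] using h
    have hpsd1 : (1 + s • S).PosSemidef := by
      refine PosSemidef.of_dotProduct_mulVec_nonneg ?_ ?_
      · show (1 + s • S)ᴴ = 1 + s • S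
        have : Sᴴ = S := hb.1
        simp [conjTranspose_add, conjTranspose_smul, this, hSymmS]
      · intro x
        have h1 : (0:ℝ) ≤ star x ⬝ᵥ x := by
          simpa using dotProduct_star_self_nonneg x
        have h2 := hb.dotProduct_mulVec_nonneg x
        simp only [add_mulVec, one_mulVec, dotProduct_add, smul_mulVec,
          dotProduct_smul, smul_eq_mul]
        exact add_nonneg h1 (mul_nonneg hs h2)
    have hpsd2 : (1 + ∑ i, A i ⊗ₖ Z i).PosSemidef := by
      rw [hZsum, ← submatrix_one_equiv e]
      have heq : Matrix.submatrix 1 ⇑e ⇑e + (s • S).submatrix ⇑e ⇑e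
          = (1 + s • S).submatrix ⇑e ⇑e := by
        ext i j
        simp [Matrix.submatrix_apply, Matrix.add_apply, Matrix.one_apply,
          EmbeddingLike.apply_eq_iff_eq]
      rw [heq]
      exact hpsd1.submatrix e
    have hfin := (hbound 1 Z hZsymm hpsd2).dotProduct_mulVec_nonneg (fun _ => (1:ℝ))
    have h3 : (0:ℝ) ≤ C - ∑ i, (s * b i) * (s * b i) := by
      simpa [hZ, dotProduct, mulVec, Matrix.sub_apply, Matrix.smul_apply,
        Matrix.one_apply, Matrix.mul_apply, Matrix.sum_apply, smul_eq_mul] using hfin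
    calc s ^ 2 * ∑ i, b i ^ 2 = ∑ i, (s * b i) * (s * b i) := by
          rw [Finset.mul_sum]; refine Finset.sum_congr rfl fun i _ => by ring
      _ ≤ C := by linarith
  have hsum : ∑ i, b i ^ 2 = 0 := by
    by_contra h
    have hnn : 0 ≤ ∑ i, b i ^ 2 := Finset.sum_nonneg fun i _ => sq_nonneg _
    have hpos : 0 < ∑ i, b i ^ 2 := lt_of_le_of_ne hnn (Ne.symm h)
    set t := ∑ i, b i ^ 2
    have hs : (0:ℝ) ≤ Real.sqrt ((C + 1) / t) := Real.sqrt_nonneg _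
    have hk := key _ hs
    rw [Real.sq_sqrt (by positivity)] at hk
    rw [div_mul_cancel₀ _ (ne_of_gt hpos)] at hk
    linarith
  funext i
  have := (Finset.sum_eq_zero_iff_of_nonneg (fun i _ => sq_nonneg (b i))).mp hsum
    i (Finset.mem_univ i)
  exact pow_eq_zero_iff (two_ne_zero) |>.mp this

/-- If the free spectrahedron `D_A` is bounded and
`I ⊗ X₀ + Σ Aᵢ ⊗ Xᵢ ⪰ 0`, then `ker X₀ ⊆ ker Xᵢ` for all `i`. -/
theorem kernel_of_homogeneous_component_subset
    (g d n : ℕ)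
    (A : Fin g → Matrix (Fin d) (Fin d) ℝ) (hA : ∀ i, (A i).IsSymm)
    (hbdd : ∃ C : ℝ, 0 < C ∧ ∀ (m : ℕ) (Z : Fin g → Matrix (Fin m) (Fin m) ℝ),
      (∀ i, (Z i).IsSymm) → (1 + ∑ i, A i ⊗ₖ Z i).PosSemidef →
      (C • (1 : Matrix (Fin m) (Fin m) ℝ) - ∑ i, Z i * Z i).PosSemidef)
    (X0 : Matrix (Fin n) (Fin n) ℝ) (hX0 : X0.IsSymm)
    (X : Fin g → Matrix (Fin n) (Fin n) ℝ) (hX : ∀ i, (X i).IsSymm)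
    (hpsd : ((1 : Matrix (Fin d) (Fin d) ℝ) ⊗ₖ X0 + ∑ i, A i ⊗ₖ X i).PosSemidef) :
    ∀ v : Fin n → ℝ, X0 *ᵥ v = 0 → ∀ i, X i *ᵥ v = 0 := by
  obtain ⟨C, hC, hbound⟩ := hbdd
  intro v hv
  set M := (1 : Matrix (Fin d) (Fin d) ℝ) ⊗ₖ X0 + ∑ i, A i ⊗ₖ X i with hM
  have hMv : ∀ u : Fin d → ℝ,
      M *ᵥ (fun pq => u pq.1 * v pq.2)
        = fun pq => ∑ i, (A i *ᵥ u) pq.1 * (X i *ᵥ v) pq.2 := by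
    intro u
    rw [hM, add_mulVec]
    have h1 : ((1 : Matrix (Fin d) (Fin d) ℝ) ⊗ₖ X0) *ᵥ (fun pq => u pq.1 * v pq.2) = 0 := by
      rw [kron_mulVec]
      funext pq
      simp [hv]
    rw [h1, zero_add, sum_mulVec']
    funext pq
    rw [Finset.sum_apply]
    refine Finset.sum_congr rfl fun i _ => ?_
    rw [kron_mulVec]
  have hquad : ∀ (y : Fin n → ℝ) (u : Fin d → ℝ),
      (fun pq => u pq.1 * y pq.2) ⬝ᵥ (M *ᵥ fun pq => u pq.1 * v pq.2)
        = ∑ i, (y ⬝ᵥ X i *ᵥ v) * (u ⬝ᵥ A i *ᵥ u) := by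
    intro y u
    rw [hMv]
    have hsplit : (fun pq : Fin d × Fin n => u pq.1 * y pq.2) ⬝ᵥ
        (fun pq => ∑ i, (A i *ᵥ u) pq.1 * (X i *ᵥ v) pq.2)
        = ∑ i, (fun pq : Fin d × Fin n => u pq.1 * y pq.2) ⬝ᵥ
            (fun pq => (A i *ᵥ u) pq.1 * (X i *ᵥ v) pq.2) := by
      simp only [dotProduct, Finset.mul_sum]
      exact Finset.sum_comm
    rw [hsplit]
    refine Finset.sum_congr rfl fun i _ => ?_
    rw [tensor_dot]
    ring
  have hAH : ∀ i, (A i).IsHermitian := by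
    intro i
    ext p q
    simpa [Matrix.conjTranspose_apply] using congrFun (congrFun (hA i) p) q
  have hHerm : ∀ c : Fin g → ℝ, (∑ i, c i • A i).IsHermitian := by
    intro c
    show (∑ i, c i • A i)ᴴ = ∑ i, c i • A i
    rw [conjTranspose_sum]
    refine Finset.sum_congr rfl fun i _ => ?_
    rw [conjTranspose_smul, star_trivial, hAH i]
  have hform : ∀ (c : Fin g → ℝ) (u : Fin d → ℝ),
      u ⬝ᵥ (∑ i, c i • A i) *ᵥ u = ∑ i, c i * (u ⬝ᵥ A i *ᵥ u) := by
    intro c u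
    rw [sum_mulVec']
    simp only [dotProduct, Finset.sum_apply, smul_mulVec, Pi.smul_apply,
      smul_eq_mul, Finset.mul_sum]
    rw [Finset.sum_comm]
    refine Finset.sum_congr rfl fun i _ => Finset.sum_congr rfl fun p _ => by ring
  -- Step A : the diagonal coefficients vanish
  have hbA : (fun i => v ⬝ᵥ X i *ᵥ v) = 0 := by
    refine bdd_zero A C hC hbound _ (PosSemidef.of_dotProduct_mulVec_nonneg (hHerm _) fun u => ?_)
    have hnn := hpsd.dotProduct_mulVec_nonneg (fun pq => u pq.1 * v pq.2)
    rw [show (star fun pq : Fin d × Fin n => u pq.1 * v pq.2)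
        = fun pq => u pq.1 * v pq.2 from funext fun pq => star_trivial _] at hnn
    rw [star_trivial, hform]
    calc (0:ℝ) ≤ _ := hnn
      _ = ∑ i, (v ⬝ᵥ X i *ᵥ v) * (u ⬝ᵥ A i *ᵥ u) := hquad v u
  -- hence M kills elementary tensors u ⊗ v
  have hM0 : ∀ u : Fin d → ℝ, M *ᵥ (fun pq => u pq.1 * v pq.2) = 0 := by
    intro u
    have h0 : (fun pq : Fin d × Fin n => u pq.1 * v pq.2) ⬝ᵥ
        (M *ᵥ fun pq => u pq.1 * v pq.2) = 0 := by
      rw [hquad v u]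
      refine Finset.sum_eq_zero fun i _ => ?_
      rw [show v ⬝ᵥ X i *ᵥ v = 0 from congrFun hbA i, zero_mul]
    refine (hpsd.dotProduct_mulVec_zero_iff (fun pq => u pq.1 * v pq.2)).mp ?_
    rw [show (star fun pq : Fin d × Fin n => u pq.1 * v pq.2)
        = fun pq => u pq.1 * v pq.2 from funext fun pq => star_trivial _]
    exact h0
  -- Step B : off-diagonal coefficients vanish
  have hkey : ∀ y : Fin n → ℝ, (fun i => y ⬝ᵥ X i *ᵥ v) = 0 := by
    intro y
    refine bdd_zero A C hC hbound _ (PosSemidef.of_dotProduct_mulVec_nonneg (hHerm _) fun u => ?_)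
    rw [star_trivial, hform]
    have hz : ∑ i, (y ⬝ᵥ X i *ᵥ v) * (u ⬝ᵥ A i *ᵥ u) = 0 := by
      rw [← hquad y u, hM0 u, dotProduct_zero]
    rw [hz]
  intro i
  exact dotProduct_self_eq_zero.mp (congrFun (hkey (X i *ᵥ v)) i)
end

section
/- A pair (X_1, X_2) of n×n real symmetric matrices is an Arveson extreme point of the free square C (defined by X_i^2 ⪯ I, i=1,2) if and only if X_1^2 = I and X_2^2 = I. Here (X_1,X_2) ∈ C is Arveson extreme if whenever Y = ((X_1, X_2) augmented by a row block) of the form Y_i = [[X_i, β_i],[β_i^T, γ_i]] lies in C, then β_1 = β_2 = 0. -/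
open Matrix

/-- Membership in the free square: both coordinates are symmetric contractions. -/
def InFreeSquare {m : Type*} [Fintype m] [DecidableEq m] (X1 X2 : Matrix m m ℝ) : Prop :=
  (1 - X1 * X1).PosSemidef ∧ (1 - X2 * X2).PosSemidef

/-- A block-diagonal matrix with PSD diagonal blocks is PSD. -/
lemma psd_fromBlocks_diag {k l : Type*} [Fintype k] [Fintype l]
    {A : Matrix k k ℝ} {D : Matrix l l ℝ} (hA : A.PosSemidef) (hD : D.PosSemidef) :
    (Matrix.fromBlocks A 0 0 D).PosSemidef := by
  refine Matrix.PosSemidef.of_dotProduct_mulVec_nonneg ?_ ?_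
  · unfold Matrix.IsHermitian
    rw [Matrix.fromBlocks_conjTranspose]
    have e1 : Aᴴ = A := hA.1
    have e2 : Dᴴ = D := hD.1
    rw [Matrix.conjTranspose_eq_transpose_of_trivial] at e1 e2
    simp [e1, e2]
  · intro x
    have hxe : x = Sum.elim (x ∘ Sum.inl) (x ∘ Sum.inr) := by
      funext i; cases i <;> rfl
    rw [hxe, Matrix.fromBlocks_mulVec]
    have hstar : star (Sum.elim (x ∘ Sum.inl) (x ∘ Sum.inr)) =
        Sum.elim (x ∘ Sum.inl) (x ∘ Sum.inr) := by funext i; simp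
    rw [hstar]
    simp only [Sum.elim_comp_inl, Sum.elim_comp_inr, Matrix.zero_mulVec, add_zero, zero_add]
    rw [sumElim_dotProduct_sumElim]
    have hq1 := hA.dotProduct_mulVec_nonneg (x ∘ Sum.inl)
    have hq2 := hD.dotProduct_mulVec_nonneg (x ∘ Sum.inr)
    have hsu : star (x ∘ Sum.inl) = x ∘ Sum.inl := by funext i; simp
    have hsv : star (x ∘ Sum.inr) = x ∘ Sum.inr := by funext i; simp
    rw [hsu] at hq1
    rw [hsv] at hq2
    exact add_nonneg hq1 hq2


lemma fromBlocksSub {k l : Type*} [Fintype k] [Fintype l]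
    (A A' : Matrix k k ℝ) (B B' : Matrix k l ℝ) (C C' : Matrix l k ℝ) (D D' : Matrix l l ℝ) :
    Matrix.fromBlocks A B C D - Matrix.fromBlocks A' B' C' D' =
      Matrix.fromBlocks (A - A') (B - B') (C - C') (D - D') := by
  simp only [sub_eq_add_neg, Matrix.fromBlocks_neg, Matrix.fromBlocks_add]

/-- If `-(β βᵀ)` is PSD then `β = 0`. -/
lemma eq_zero_of_neg_mul_transpose_psd {k l : Type*} [Fintype k] [Fintype l] [DecidableEq k]
    {β : Matrix k l ℝ} (h : (-(β * βᵀ)).PosSemidef) : β = 0 := by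
  have key : ∀ x : k → ℝ, βᵀ *ᵥ x = 0 := by
    intro x
    have hx := h.dotProduct_mulVec_nonneg x
    have hstar : star x = x := by funext i; simp
    have calc1 : x ⬝ᵥ (β * βᵀ) *ᵥ x = (βᵀ *ᵥ x) ⬝ᵥ (βᵀ *ᵥ x) := by
      rw [← Matrix.mulVec_mulVec, Matrix.dotProduct_mulVec, Matrix.mulVec_transpose]
    rw [hstar, Matrix.neg_mulVec, dotProduct_neg, calc1] at hx
    have hle : (βᵀ *ᵥ x) ⬝ᵥ (βᵀ *ᵥ x) ≤ 0 := by linarith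
    have hge : 0 ≤ (βᵀ *ᵥ x) ⬝ᵥ (βᵀ *ᵥ x) := by
      have := dotProduct_self_star_nonneg (βᵀ *ᵥ x)
      have hs : star (βᵀ *ᵥ x) = βᵀ *ᵥ x := by funext i; simp
      rwa [hs] at this
    exact dotProduct_self_eq_zero.mp (le_antisymm hle hge)
  ext i j
  have := congrFun (key (Pi.single i 1)) j
  simpa [Matrix.mulVec, dotProduct, Pi.single_apply] using this

/-- A pair `(X₁,X₂)` in the free square is an Arveson extreme point
(every dilation staying in the free square has zero off-diagonal blocks) iff
`X₁² = I` and `X₂² = I`. -/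
theorem arveson_extreme_free_square_iff
    (n : ℕ) (X1 X2 : Matrix (Fin n) (Fin n) ℝ)
    (h1 : X1.IsSymm) (h2 : X2.IsSymm) (hmem : InFreeSquare X1 X2) :
    (∀ (m : ℕ) (β1 β2 : Matrix (Fin n) (Fin m) ℝ) (γ1 γ2 : Matrix (Fin m) (Fin m) ℝ),
        γ1.IsSymm → γ2.IsSymm →
        InFreeSquare (Matrix.fromBlocks X1 β1 β1ᵀ γ1) (Matrix.fromBlocks X2 β2 β2ᵀ γ2) →
        β1 = 0 ∧ β2 = 0) ↔
    (X1 * X1 = 1 ∧ X2 * X2 = 1) := by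
  have hX1H : X1ᴴ = X1 := by
    rw [Matrix.conjTranspose_eq_transpose_of_trivial]; exact h1
  have hX2H : X2ᴴ = X2 := by
    rw [Matrix.conjTranspose_eq_transpose_of_trivial]; exact h2
  constructor
  · intro hext
    -- dilation showing X1 * X1 = 1
    have key : ∀ (X : Matrix (Fin n) (Fin n) ℝ), X.IsSymm → Xᴴ = X →
        (1 - X * X).PosSemidef →
        (1 - (Matrix.fromBlocks X (1 - X * X) (1 - X * X)ᵀ (-X)) *
          (Matrix.fromBlocks X (1 - X * X) (1 - X * X)ᵀ (-X))).PosSemidef := by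
      intro X hs hH hp
      have hAt : (1 - X * X)ᵀ = 1 - X * X := by
        rw [Matrix.transpose_sub, Matrix.transpose_one, Matrix.transpose_mul, hs.eq]
      rw [hAt, Matrix.fromBlocks_multiply]
      have hoff : X * (1 - X * X) + (1 - X * X) * (-X) = 0 := by noncomm_ring
      have hdiag1 : (1 : Matrix (Fin n ⊕ Fin n) (Fin n ⊕ Fin n) ℝ) =
          Matrix.fromBlocks 1 0 0 1 := (Matrix.fromBlocks_one).symm
      have hblock : X * X + (1 - X * X) * (1 - X * X) = 1 - X * (1 - X * X) * X := by
        noncomm_ring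
      rw [hoff, hblock, hdiag1]
      have hoff2 : (1 - X * X) * (1 - X * X) + (-X) * (-X) = 1 - X * (1 - X * X) * X := by
        noncomm_ring
      have hoff3 : (1 - X * X) * X + (-X) * (1 - X * X) = 0 := by noncomm_ring
      rw [hoff2, hoff3]
      have : Matrix.fromBlocks (1 : Matrix (Fin n) (Fin n) ℝ) 0 0 1 -
          Matrix.fromBlocks (1 - X * (1 - X * X) * X) 0 0 (1 - X * (1 - X * X) * X) =
          Matrix.fromBlocks (X * (1 - X * X) * X) 0 0 (X * (1 - X * X) * X) := by
        rw [fromBlocksSub]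
        simp [sub_sub_cancel]
      rw [this]
      have hpsd : (X * (1 - X * X) * X).PosSemidef := by
        have := hp.mul_mul_conjTranspose_same X
        rwa [hH] at this
      exact psd_fromBlocks_diag hpsd hpsd
    constructor
    · -- use dilation in first coordinate
      have hmem2 : (1 - (Matrix.fromBlocks X2 (0 : Matrix (Fin n) (Fin n) ℝ)
          (0 : Matrix (Fin n) (Fin n) ℝ)ᵀ 0) *
          (Matrix.fromBlocks X2 0 (0 : Matrix (Fin n) (Fin n) ℝ)ᵀ 0)).PosSemidef := by
        rw [Matrix.transpose_zero, Matrix.fromBlocks_multiply]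
        simp only [Matrix.mul_zero, Matrix.zero_mul, add_zero, zero_add, Matrix.mul_one,
          Matrix.one_mul]
        have : (1 : Matrix (Fin n ⊕ Fin n) (Fin n ⊕ Fin n) ℝ) -
            Matrix.fromBlocks (X2 * X2) 0 0 0 = Matrix.fromBlocks (1 - X2 * X2) 0 0 1 := by
          rw [← Matrix.fromBlocks_one, fromBlocksSub]
          simp
        rw [this]
        exact psd_fromBlocks_diag hmem.2 Matrix.PosSemidef.one
      have := hext n (1 - X1 * X1) 0 (-X1) 0 h1.neg Matrix.isSymm_zero
        ⟨key X1 h1 hX1H hmem.1, hmem2⟩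
      have h0 : 1 - X1 * X1 = 0 := this.1
      linear_combination (norm := noncomm_ring) -h0
    · have hmem2 : (1 - (Matrix.fromBlocks X1 (0 : Matrix (Fin n) (Fin n) ℝ)
          (0 : Matrix (Fin n) (Fin n) ℝ)ᵀ 0) *
          (Matrix.fromBlocks X1 0 (0 : Matrix (Fin n) (Fin n) ℝ)ᵀ 0)).PosSemidef := by
        rw [Matrix.transpose_zero, Matrix.fromBlocks_multiply]
        simp only [Matrix.mul_zero, Matrix.zero_mul, add_zero, zero_add, Matrix.mul_one,
          Matrix.one_mul]
        have : (1 : Matrix (Fin n ⊕ Fin n) (Fin n ⊕ Fin n) ℝ) -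
            Matrix.fromBlocks (X1 * X1) 0 0 0 = Matrix.fromBlocks (1 - X1 * X1) 0 0 1 := by
          rw [← Matrix.fromBlocks_one, fromBlocksSub]
          simp
        rw [this]
        exact psd_fromBlocks_diag hmem.1 Matrix.PosSemidef.one
      have := hext n 0 (1 - X2 * X2) 0 (-X2) Matrix.isSymm_zero h2.neg
        ⟨hmem2, key X2 h2 hX2H hmem.2⟩
      have h0 : 1 - X2 * X2 = 0 := this.2
      linear_combination (norm := noncomm_ring) -h0
  · rintro ⟨hsq1, hsq2⟩ m β1 β2 γ1 γ2 hγ1 hγ2 hY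
    have key : ∀ (X : Matrix (Fin n) (Fin n) ℝ) (β : Matrix (Fin n) (Fin m) ℝ)
        (γ : Matrix (Fin m) (Fin m) ℝ), X * X = 1 →
        (1 - (Matrix.fromBlocks X β βᵀ γ) * (Matrix.fromBlocks X β βᵀ γ)).PosSemidef →
        β = 0 := by
      intro X β γ hsq hp
      have hpsub := hp.submatrix Sum.inl
      have hcalc : (1 - (Matrix.fromBlocks X β βᵀ γ) *
          (Matrix.fromBlocks X β βᵀ γ)).submatrix Sum.inl Sum.inl = -(β * βᵀ) := by
        rw [Matrix.fromBlocks_multiply, ← Matrix.fromBlocks_one, sub_eq_add_neg,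
          Matrix.fromBlocks_neg, Matrix.fromBlocks_add]
        ext i j
        simp only [Matrix.submatrix_apply, Matrix.fromBlocks_apply₁₁]
        rw [hsq]
        simp [Matrix.add_apply, Matrix.neg_apply]
      rw [hcalc] at hpsub
      exact eq_zero_of_neg_mul_transpose_psd hpsub
    exact ⟨key X1 β1 γ1 hsq1 hY.1, key X2 β2 γ2 hsq2 hY.2⟩
end

section
/- Let X be a real symmetric n×n matrix with ‖X‖ ≤ 1 but X^2 ≠ I. Then there exist a nonzero column vector β ∈ R^n and a real number γ such that the (n+1)×(n+1) symmetric matrix [[X, β],[β^T, γ]] has norm at most 1 (equivalently, its square is ⪯ I). -/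
open Matrix

/-- A block matrix `[[M, 0],[0, 0]]` with `M` PSD is PSD. -/
lemma psd_fromBlocks_zero {n m : ℕ} {M : Matrix (Fin n) (Fin n) ℝ} (hM : M.PosSemidef) :
    (Matrix.fromBlocks M (0 : Matrix (Fin n) (Fin m) ℝ) 0 0).PosSemidef := by
  refine posSemidef_iff_dotProduct_mulVec.mpr ⟨?_, ?_⟩
  · show _ = _
    rw [fromBlocks_conjTranspose, hM.1]
    simp
  · intro x
    have h := hM.dotProduct_mulVec_nonneg (x ∘ Sum.inl)
    rw [star_trivial] at h
    rw [star_trivial, fromBlocks_mulVec]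
    calc (0:ℝ) ≤ (x ∘ Sum.inl) ⬝ᵥ (M *ᵥ (x ∘ Sum.inl)) := h
      _ = x ⬝ᵥ Sum.elim (M *ᵥ x ∘ Sum.inl + 0 *ᵥ x ∘ Sum.inr)
            (0 *ᵥ x ∘ Sum.inl + 0 *ᵥ x ∘ Sum.inr) := by
          simp [dotProduct, Fintype.sum_sum_type]

/-- A symmetric contraction `X` with `X² ≠ I` admits a nontrivial
symmetric contractive dilation `[[X, β],[βᵀ, γ]]`. -/
theorem contraction_not_symmetry_has_nontrivial_dilation
    (n : ℕ) (X : Matrix (Fin n) (Fin n) ℝ) (hs : X.IsSymm)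
    (hc : (1 - X * X).PosSemidef) (hne : X * X ≠ 1) :
    ∃ (β : Fin n → ℝ) (γ : ℝ), β ≠ 0 ∧
      (1 - (Matrix.fromBlocks X (Matrix.of fun i (_ : Fin 1) => β i)
              (Matrix.of fun (_ : Fin 1) j => β j) (Matrix.of fun _ _ => γ)) *
           (Matrix.fromBlocks X (Matrix.of fun i (_ : Fin 1) => β i)
              (Matrix.of fun (_ : Fin 1) j => β j) (Matrix.of fun _ _ => γ))).PosSemidef := by
  classical
  have hX : X.IsHermitian := by
    show _ = _
    ext i j
    simpa [Matrix.conjTranspose_apply] using congrFun (congrFun hs i) j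
  set U := (Matrix.IsHermitian.eigenvectorUnitary hX : Matrix (Fin n) (Fin n) ℝ) with hU
  set D : Matrix (Fin n) (Fin n) ℝ := diagonal (RCLike.ofReal ∘ hX.eigenvalues) with hDdef
  -- there is an eigenvalue with square ≠ 1
  have hex : ∃ i, hX.eigenvalues i ^ 2 ≠ 1 := by
    by_contra h
    push_neg at h
    apply hne
    have hspec : X = U * D * star U := hX.spectral_theorem
    have hUU : U * star U = 1 :=
      (Matrix.mem_unitaryGroup_iff).mp (Matrix.IsHermitian.eigenvectorUnitary hX).2
    have hUU' : star U * U = 1 :=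
      (Matrix.mem_unitaryGroup_iff').mp (Matrix.IsHermitian.eigenvectorUnitary hX).2
    have hD : D * D = (1 : Matrix (Fin n) (Fin n) ℝ) := by
      rw [hDdef, diagonal_mul_diagonal]
      have : (fun i => (RCLike.ofReal ∘ hX.eigenvalues) i * (RCLike.ofReal ∘ hX.eigenvalues) i)
          = fun _ => (1:ℝ) := by
        funext i
        simpa [← pow_two] using h i
      rw [this, diagonal_one]
    calc X * X = (U * D * star U) * (U * D * star U) := by rw [← hspec]
      _ = U * D * ((star U * U) * (D * star U)) := by noncomm_ring
      _ = U * ((D * D) * star U) := by rw [hUU', one_mul]; noncomm_ring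
      _ = U * star U := by rw [hD, one_mul]
      _ = 1 := hUU
  obtain ⟨i, hi⟩ := hex
  set μ : ℝ := hX.eigenvalues i with hμ
  set v : Fin n → ℝ := ⇑(hX.eigenvectorBasis i) with hv
  have hXv : X *ᵥ v = μ • v := hX.mulVec_eigenvectorBasis i
  have hvv : v ⬝ᵥ v = 1 := by
    have h1 : ‖hX.eigenvectorBasis i‖ = 1 := hX.eigenvectorBasis.orthonormal.1 i
    have h2 := EuclideanSpace.inner_eq_star_dotProduct (𝕜 := ℝ)
      (hX.eigenvectorBasis i) (hX.eigenvectorBasis i)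
    rw [real_inner_self_eq_norm_sq, h1] at h2
    simpa using h2.symm
  have hXXv : (1 - X * X) *ᵥ v = (1 - μ ^ 2) • v := by
    rw [sub_mulVec, one_mulVec, ← mulVec_mulVec, hXv, mulVec_smul, hXv, smul_smul,
      sub_smul, one_smul, pow_two]
  have hμ1 : μ ^ 2 < 1 := by
    have h0 := hc.dotProduct_mulVec_nonneg v
    rw [star_trivial, hXXv, dotProduct_smul, hvv, smul_eq_mul, mul_one] at h0
    cases lt_or_eq_of_le h0 with
    | inl h => linarith
    | inr h => exact absurd h.symm (sub_ne_zero.mpr (Ne.symm hi))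
  set t : ℝ := Real.sqrt (1 - μ ^ 2) with htdef
  have ht2 : t ^ 2 = 1 - μ ^ 2 := Real.sq_sqrt (by linarith)
  have ht0 : 0 < t := Real.sqrt_pos.2 (by linarith)
  have hv0 : v ≠ 0 := by
    intro h
    rw [h] at hvv
    simp at hvv
  refine ⟨t • v, -μ, ?_, ?_⟩
  · intro h
    exact hv0 ((smul_eq_zero.mp h).resolve_left ht0.ne')
  -- the dilation is a contraction
  have hsum1 : ∀ a, ∑ k, X a k * (t * v k) = t * (μ * v a) := by
    intro a
    have h2 := congrFun hXv a
    simp only [mulVec, dotProduct, Pi.smul_apply, smul_eq_mul] at h2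
    calc ∑ k, X a k * (t * v k) = t * ∑ k, X a k * v k := by
          rw [Finset.mul_sum]; exact Finset.sum_congr rfl fun k _ => by ring
      _ = t * (μ * v a) := by rw [h2]
  have key : (1 - (Matrix.fromBlocks X (Matrix.of fun i (_ : Fin 1) => (t • v) i)
              (Matrix.of fun (_ : Fin 1) j => (t • v) j) (Matrix.of fun _ _ => -μ)) *
           (Matrix.fromBlocks X (Matrix.of fun i (_ : Fin 1) => (t • v) i)
              (Matrix.of fun (_ : Fin 1) j => (t • v) j) (Matrix.of fun _ _ => -μ)))
      = Matrix.fromBlocks (1 - X * X - vecMulVec (t • v) (t • v)) 0 0 0 := by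
    rw [fromBlocks_multiply]
    ext ab cd
    rcases ab with a | a <;> rcases cd with b | b
    · simp only [Matrix.sub_apply, fromBlocks_apply₁₁, Matrix.add_apply, mul_apply, of_apply,
        Fin.sum_univ_one, vecMulVec_apply, Pi.smul_apply, smul_eq_mul, one_apply,
        Sum.inl.injEq]
      by_cases hab : a = b <;> simp [hab] <;> ring
    · simp only [Matrix.sub_apply, fromBlocks_apply₁₂, Matrix.add_apply, mul_apply, of_apply,
        Fin.sum_univ_one, Pi.smul_apply, smul_eq_mul, one_apply, Matrix.zero_apply,
        reduceCtorEq, if_false]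
      rw [hsum1 a]
      ring
    · have h1 : ∑ k, (t * v k) * X k b = t * (μ * v b) := by
        calc ∑ k, (t * v k) * X k b = ∑ k, X b k * (t * v k) := by
              refine Finset.sum_congr rfl fun k _ => ?_
              have hX' : X k b = X b k := by
                have h3 := congrFun (congrFun hs k) b
                simpa [Matrix.transpose_apply] using h3.symm
              rw [hX']; ring
          _ = t * (μ * v b) := hsum1 b
      simp only [Matrix.sub_apply, fromBlocks_apply₂₁, Matrix.add_apply, mul_apply, of_apply,
        Fin.sum_univ_one, Pi.smul_apply, smul_eq_mul, one_apply, Matrix.zero_apply,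
        reduceCtorEq, if_false]
      rw [h1]
      ring
    · have h1 : ∑ k, (t * v k) * (t * v k) = t ^ 2 := by
        have h2 : ∑ k, (t * v k) * (t * v k) = t ^ 2 * ∑ k, v k * v k := by
          rw [Finset.mul_sum]; exact Finset.sum_congr rfl fun k _ => by ring
        have h3 : ∑ k, v k * v k = 1 := hvv
        rw [h2, h3, mul_one]
      have hab : a = b := Subsingleton.elim a b
      subst hab
      simp only [Matrix.sub_apply, fromBlocks_apply₂₂, Matrix.add_apply, mul_apply, of_apply,
        Fin.sum_univ_one, Pi.smul_apply, smul_eq_mul, one_apply_eq, Matrix.zero_apply]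
      rw [h1, ht2]
      ring
  rw [key]
  apply psd_fromBlocks_zero
  -- PSD of 1 - X*X - ββᵀ
  refine posSemidef_iff_dotProduct_mulVec.mpr ⟨?_, ?_⟩
  · refine Matrix.IsHermitian.sub (Matrix.IsHermitian.sub Matrix.isHermitian_one ?_) ?_
    · show _ = _
      rw [conjTranspose_mul, hX]
    · show _ = _
      ext a b
      simp [conjTranspose_apply, vecMulVec_apply, mul_comm]
      ring
  · intro w
    rw [star_trivial]
    have hβw : vecMulVec (t • v) (t • v) *ᵥ w = (t ^ 2 * (v ⬝ᵥ w)) • v := by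
      ext a
      show ∑ k, vecMulVec (t • v) (t • v) a k * w k = t ^ 2 * (v ⬝ᵥ w) * v a
      calc ∑ k, vecMulVec (t • v) (t • v) a k * w k
          = ∑ k, t ^ 2 * (v k * w k) * v a := by
            refine Finset.sum_congr rfl fun k _ => ?_
            simp only [vecMulVec_apply, Pi.smul_apply, smul_eq_mul]
            ring
        _ = (∑ k, t ^ 2 * (v k * w k)) * v a := by rw [Finset.sum_mul]
        _ = t ^ 2 * (v ⬝ᵥ w) * v a := by rw [← Finset.mul_sum]; rfl
    rw [sub_mulVec, hβw, dotProduct_sub, dotProduct_smul, smul_eq_mul]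
    have hvAw : v ⬝ᵥ ((1 - X * X) *ᵥ w) = (1 - μ ^ 2) * (v ⬝ᵥ w) := by
      have hsymA : (1 - X * X)ᵀ = 1 - X * X := by
        rw [transpose_sub, transpose_one, transpose_mul, hs]
      rw [dotProduct_mulVec]
      have hvm : v ᵥ* (1 - X * X) = (1 - μ ^ 2) • v := by
        conv_lhs => rw [← hsymA]
        rw [vecMul_transpose, hXXv]
      rw [hvm, smul_dotProduct, smul_eq_mul]
    have hwv' : w ⬝ᵥ v = v ⬝ᵥ w := dotProduct_comm w v
    have h0 := hc.dotProduct_mulVec_nonneg (w - (v ⬝ᵥ w) • v)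
    rw [star_trivial, mulVec_sub, mulVec_smul, hXXv, dotProduct_sub, sub_dotProduct,
      sub_dotProduct, smul_dotProduct, smul_dotProduct, dotProduct_smul, dotProduct_smul,
      dotProduct_smul] at h0
    simp only [smul_eq_mul, dotProduct_smul, hvAw, hwv', hvv, mul_one] at h0
    rw [hwv', ht2]
    nlinarith [h0]
end

section
/- Let X = (X_1, X_2) be a pair of n×n real symmetric matrices with X_1^2 = I and X_2^2 = I. If n > 2, then X_1 and X_2 have a common nontrivial reducing subspace; i.e., there exists a symmetric matrix S ∈ SM_n(R), not a scalar multiple of the identity, commuting with both X_1 and X_2. -/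
open Matrix

section Aux

variable {n : ℕ}

private lemma mul_vmv (M : Matrix (Fin n) (Fin n) ℝ) (a b : Fin n → ℝ) :
    M * vecMulVec a b = vecMulVec (M *ᵥ a) b := by
  ext i j
  simp only [mul_apply, vecMulVec_apply, mulVec, dotProduct, Finset.sum_mul]
  exact Finset.sum_congr rfl fun k _ => by ring

private lemma vmv_mul (M : Matrix (Fin n) (Fin n) ℝ) (a b : Fin n → ℝ) :
    vecMulVec a b * M = vecMulVec a (Mᵀ *ᵥ b) := by
  ext i j
  simp only [mul_apply, vecMulVec_apply, mulVec, dotProduct, Finset.mul_sum, transpose_apply]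
  exact Finset.sum_congr rfl fun k _ => by ring

private lemma vmv_mul_vmv (a b c d : Fin n → ℝ) :
    vecMulVec a b * vecMulVec c d = (b ⬝ᵥ c) • vecMulVec a d := by
  ext i j
  simp only [mul_apply, vecMulVec_apply, Matrix.smul_apply, dotProduct, Finset.sum_mul,
    smul_eq_mul]
  exact Finset.sum_congr rfl fun k _ => by ring

private lemma trace_vmv (a b : Fin n → ℝ) : (vecMulVec a b).trace = a ⬝ᵥ b := by
  simp [trace, diag, vecMulVec_apply, dotProduct]

private lemma transpose_vmv (a b : Fin n → ℝ) : (vecMulVec a b)ᵀ = vecMulVec b a := by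
  ext i j; simp [vecMulVec_apply, mul_comm]

private lemma vmv_smul_right (a b : Fin n → ℝ) (t : ℝ) :
    vecMulVec a (t • b) = t • vecMulVec a b := by
  ext i j; simp [vecMulVec_apply]; ring

private lemma dot_self_pos {v : Fin n → ℝ} (hv : v ≠ 0) : 0 < v ⬝ᵥ v := by
  rcases lt_or_eq_of_le (Finset.sum_nonneg fun i _ => mul_self_nonneg (v i) :
      (0:ℝ) ≤ v ⬝ᵥ v) with h | h
  · exact h
  · exact absurd (dotProduct_self_eq_zero.mp h.symm) hv

private lemma exists_eigvec (hn : 0 < n) (A : Matrix (Fin n) (Fin n) ℝ) (hA2 : A * A = 1) :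
    ∃ (v : Fin n → ℝ) (ε : ℝ), v ≠ 0 ∧ ε * ε = 1 ∧ A *ᵥ v = ε • v := by
  set u : Fin n → ℝ := Pi.single ⟨0, hn⟩ 1 with hu
  have hu0 : u ≠ 0 := by
    intro h
    have := congrFun h ⟨0, hn⟩
    simp [hu] at this
  by_cases h : A *ᵥ u + u = 0
  · refine ⟨u, -1, hu0, by norm_num, ?_⟩
    have : A *ᵥ u = -u := by linear_combination (norm := module) h
    rw [this]; module
  · refine ⟨A *ᵥ u + u, 1, h, by norm_num, ?_⟩
    have : A *ᵥ (A *ᵥ u) = u := by rw [mulVec_mulVec, hA2, one_mulVec]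
    rw [mulVec_add, this, one_smul, add_comm]

private lemma symm_dot (A : Matrix (Fin n) (Fin n) ℝ) (hA : A.IsSymm) (a b : Fin n → ℝ) :
    a ⬝ᵥ (A *ᵥ b) = (A *ᵥ a) ⬝ᵥ b := by
  rw [dotProduct_mulVec, ← mulVec_transpose, hA.eq]

/-- The anticommuting case: `A` a symmetry, `C ≠ 0` symmetric with `C² = d•1`,
anticommuting with `A`. -/
private lemma anticomm_case (hn : 2 < n) (A C : Matrix (Fin n) (Fin n) ℝ)
    (hAs : A.IsSymm) (hCs : C.IsSymm) (hA2 : A * A = 1) (d : ℝ)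
    (hC2 : C * C = d • 1) (hC0 : C ≠ 0) (hac : A * C = -(C * A)) :
    ∃ S : Matrix (Fin n) (Fin n) ℝ, S.IsSymm ∧ (∀ t : ℝ, S ≠ t • 1) ∧
      S * A = A * S ∧ S * C = C * S := by
  have hnpos : 0 < n := by omega
  -- d > 0
  have htr : (C * C).trace = d * n := by
    rw [hC2, trace_smul, trace_one]; simp
  have htr2 : (C * C).trace = ∑ i, ∑ k, C i k * C i k := by
    simp only [trace, diag, mul_apply]
    refine Finset.sum_congr rfl fun i _ => Finset.sum_congr rfl fun k _ => ?_
    have : C k i = C i k := by simpa using congrFun (congrFun hCs.eq i) k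
    rw [this]
  have htrpos : 0 < (C * C).trace := by
    rw [htr2]
    have hne : ∃ i j, C i j ≠ 0 := by
      by_contra h
      push_neg at h
      exact hC0 (by ext i j; simpa using h i j)
    obtain ⟨i0, j0, hij⟩ := hne
    refine Finset.sum_pos' (fun i _ => Finset.sum_nonneg fun k _ => mul_self_nonneg _)
      ⟨i0, Finset.mem_univ _, Finset.sum_pos' (fun k _ => mul_self_nonneg _)
        ⟨j0, Finset.mem_univ _, mul_self_pos.mpr hij⟩⟩
  have hd : 0 < d := by
    by_contra h
    push_neg at h
    have : d * n ≤ 0 := mul_nonpos_iff.mpr (Or.inr ⟨h, by positivity⟩)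
    rw [← htr] at this
    linarith
  obtain ⟨v, ε, hv0, hε2, hAv⟩ := exists_eigvec hnpos A hA2
  have hεne : ε ≠ 0 := fun h => by rw [h] at hε2; norm_num at hε2
  set w : Fin n → ℝ := C *ᵥ v with hw
  have hAw : A *ᵥ w = (-ε) • w := by
    rw [hw, mulVec_mulVec, hac, neg_mulVec, ← mulVec_mulVec, hAv, mulVec_smul]
    module
  have hCw : C *ᵥ w = d • v := by
    rw [hw, mulVec_mulVec, hC2, smul_mulVec, one_mulVec]
  set α : ℝ := v ⬝ᵥ v with hα
  have hαpos : 0 < α := dot_self_pos hv0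
  -- orthogonality
  have horth : v ⬝ᵥ w = 0 := by
    have h1 : v ⬝ᵥ (A *ᵥ w) = (A *ᵥ v) ⬝ᵥ w := symm_dot A hAs v w
    rw [hAw, hAv, dotProduct_smul, smul_dotProduct] at h1
    have : (2 * ε) • (v ⬝ᵥ w) = 0 := by
      have := h1
      simp only [smul_eq_mul] at this ⊢
      linarith
    simpa [hεne, smul_eq_mul, mul_eq_zero] using this
  set β : ℝ := w ⬝ᵥ w with hβ
  have hβα : β = d * α := by
    rw [hβ, hα]
    calc w ⬝ᵥ w = v ⬝ᵥ (C *ᵥ w) := (symm_dot C hCs v w).symm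
    _ = d * (v ⬝ᵥ v) := by rw [hCw, dotProduct_smul, smul_eq_mul]
  have hβpos : 0 < β := by rw [hβα]; positivity
  set S : Matrix (Fin n) (Fin n) ℝ :=
    α⁻¹ • vecMulVec v v + β⁻¹ • vecMulVec w w with hS
  have hSsymm : S.IsSymm := by
    rw [Matrix.IsSymm, hS, transpose_add, transpose_smul, transpose_smul,
      transpose_vmv, transpose_vmv]
  have hSA : S * A = A * S := by
    rw [hS, add_mul, mul_add, smul_mul_assoc, smul_mul_assoc, mul_smul_comm, mul_smul_comm,
      vmv_mul, vmv_mul, hAs.eq, mul_vmv, mul_vmv, hAv, hAw,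
      vmv_smul_right, vmv_smul_right]
    have h1 : vecMulVec (ε • v) v = ε • vecMulVec v v := by
      rw [← transpose_vmv, vmv_smul_right, transpose_smul, transpose_vmv]
    have h2 : vecMulVec ((-ε) • w) w = (-ε) • vecMulVec w w := by
      rw [← transpose_vmv, vmv_smul_right, transpose_smul, transpose_vmv]
    rw [h1, h2]
  have hvmw : vecMulVec (d • v) w = d • vecMulVec v w := by
    rw [← transpose_vmv, vmv_smul_right, transpose_smul, transpose_vmv]
  have hdne : d ≠ 0 := ne_of_gt hd
  have hαne : α ≠ 0 := ne_of_gt hαpos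
  have hβinvd : β⁻¹ * d = α⁻¹ := by
    rw [hβα]; field_simp
  have hSC : S * C = C * S := by
    rw [hS, add_mul, mul_add, smul_mul_assoc, smul_mul_assoc, mul_smul_comm, mul_smul_comm,
      vmv_mul, vmv_mul, hCs.eq, mul_vmv, mul_vmv, ← hw, hCw, vmv_smul_right, hvmw,
      smul_smul, smul_smul, hβinvd]
    abel
  refine ⟨S, hSsymm, ?_, hSA, hSC⟩
  -- S is idempotent
  have hSS : S * S = S := by
    have hwv : w ⬝ᵥ v = 0 := by rw [dotProduct_comm]; exact horth
    have e1 : α⁻¹ * (α⁻¹ * α) = α⁻¹ := by field_simp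
    have e2 : β⁻¹ * (β⁻¹ * β) = β⁻¹ := by field_simp
    rw [hS]
    simp only [add_mul, mul_add, smul_mul_assoc, mul_smul_comm, vmv_mul_vmv, horth, hwv,
      zero_smul, smul_zero, add_zero, zero_add, smul_smul, ← hα, ← hβ]
    rw [e1, e2]
  have hStr : S.trace = 2 := by
    rw [hS, trace_add, trace_smul, trace_smul, trace_vmv, trace_vmv, ← hα, ← hβ]
    field_simp
    norm_num
    norm_num [hαne, hβpos.ne']
  intro t ht
  have ht2 : t * t = t := by
    have h1 : (t • (1 : Matrix (Fin n) (Fin n) ℝ)) * (t • 1) = t • 1 := by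
      rw [← ht, hSS]
    have h2 : ((t * t) • (1 : Matrix (Fin n) (Fin n) ℝ)) = t • 1 := by
      rw [← h1, smul_mul_smul_comm, one_mul]
    have := congrFun (congrFun h2 ⟨0, hnpos⟩) ⟨0, hnpos⟩
    simpa using this
  have htn : t * n = 2 := by
    rw [← hStr, ht, trace_smul, trace_one]; simp
  rcases mul_eq_zero.mp (show t * (t - 1) = 0 by ring_nf; linarith) with h | h
  · rw [h] at htn; norm_num at htn
  · have ht1 : t = 1 := by linarith [sub_eq_zero.mp h]
    rw [ht1, one_mul] at htn
    have hn2 : n = 2 := by exact_mod_cast htn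
    omega

end Aux

/-- If `X₁² = I`, `X₂² = I` are symmetric `n × n` with `n > 2`, then the pair
is reducible: some symmetric matrix, not a scalar multiple of the identity, commutes with
both `X₁` and `X₂`. -/
theorem pair_of_symmetries_reducible_of_two_lt
    (n : ℕ) (hn : 2 < n) (X1 X2 : Matrix (Fin n) (Fin n) ℝ)
    (h1 : X1.IsSymm) (h2 : X2.IsSymm)
    (hs1 : X1 * X1 = 1) (hs2 : X2 * X2 = 1) :
    ∃ S : Matrix (Fin n) (Fin n) ℝ, S.IsSymm ∧ (∀ c : ℝ, S ≠ c • 1) ∧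
      S * X1 = X1 * S ∧ S * X2 = X2 * S := by
  have hnpos : 0 < n := by omega
  have hscomm : ∀ (a : ℝ) (M : Matrix (Fin n) (Fin n) ℝ), M * (a • 1) = (a • 1) * M := by
    intro a M
    rw [mul_smul_comm, smul_mul_assoc, mul_one, one_mul]
  by_cases hA : ∃ a : ℝ, X1 = a • 1
  · obtain ⟨a, ha⟩ := hA
    by_cases hB : ∃ b : ℝ, X2 = b • 1
    · obtain ⟨b, hb⟩ := hB
      set i0 : Fin n := ⟨0, by omega⟩
      set i1 : Fin n := ⟨1, by omega⟩
      refine ⟨Matrix.diagonal (fun i => if i = i0 then 1 else 0), isSymm_diagonal _, ?_, ?_, ?_⟩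
      · intro c hc
        have e0 := congrFun (congrFun hc i0) i0
        have e1 := congrFun (congrFun hc i1) i1
        have hne : i1 ≠ i0 := by simp [i0, i1, Fin.ext_iff]
        simp [Matrix.diagonal, Matrix.one_apply, hne] at e0 e1
        rw [← e1] at e0
        norm_num at e0
      · rw [ha]; exact hscomm a _
      · rw [hb]; exact hscomm b _
    · refine ⟨X2, h2, fun c hc => hB ⟨c, hc⟩, ?_, rfl⟩
      rw [ha]; exact hscomm a _
  · by_cases hB : ∃ b : ℝ, X2 = b • 1
    · obtain ⟨b, hb⟩ := hB
      refine ⟨X1, h1, fun c hc => hA ⟨c, hc⟩, rfl, ?_⟩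
      rw [hb]; exact hscomm b _
    · set S0 : Matrix (Fin n) (Fin n) ℝ := X1 * X2 + X2 * X1 with hS0
      have hS0symm : S0.IsSymm := by
        rw [Matrix.IsSymm, hS0, transpose_add, transpose_mul, transpose_mul, h1.eq, h2.eq,
          add_comm]
      have hS0c1 : S0 * X1 = X1 * S0 := by
        simp only [hS0, add_mul, mul_add, mul_assoc]
        rw [hs1, mul_one, ← mul_assoc X1 X1 X2, hs1, one_mul, add_comm]
      have hS0c2 : S0 * X2 = X2 * S0 := by
        simp only [hS0, add_mul, mul_add, mul_assoc]
        rw [hs2, mul_one, ← mul_assoc X2 X2 X1, hs2, one_mul, add_comm]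
      by_cases hS0s : ∃ c : ℝ, S0 = c • 1
      · obtain ⟨c, hc⟩ := hS0s
        by_cases hcomm : X1 * X2 = X2 * X1
        · -- X2 = (c/2) • X1
          have hc' : X1 * X2 + X2 * X1 = c • 1 := by rw [← hS0]; exact hc
          have h2AB : X1 * X2 + X1 * X2 = c • 1 := by
            nth_rewrite 2 [hcomm]; exact hc'
          have h3 : (2 : ℝ) • (X1 * X2) = c • 1 := by rw [two_smul]; exact h2AB
          have h4 : X1 * X2 = (2 : ℝ)⁻¹ • (c • 1) := by
            rw [← h3, smul_smul]; norm_num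
          have key : X1 * X2 = (c / 2) • 1 := by
            rw [h4, smul_smul]
            congr 1
            ring
          have hX2 : X2 = (c / 2) • X1 := by
            calc X2 = (X1 * X1) * X2 := by rw [hs1, one_mul]
            _ = X1 * (X1 * X2) := by rw [mul_assoc]
            _ = X1 * ((c / 2) • 1) := by rw [key]
            _ = (c / 2) • X1 := by rw [mul_smul_comm, mul_one]
          refine ⟨X1, h1, fun t ht => hA ⟨t, ht⟩, rfl, ?_⟩
          rw [hX2, smul_mul_assoc, mul_smul_comm]
        · -- anticommuting case
          set C : Matrix (Fin n) (Fin n) ℝ := X2 - (c / 2) • X1 with hCdef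
          have hCs : C.IsSymm := by
            rw [Matrix.IsSymm, hCdef, transpose_sub, transpose_smul, h1.eq, h2.eq]
          have hC0 : C ≠ 0 := by
            intro h
            have : X2 = (c / 2) • X1 := by
              have := sub_eq_zero.mp h
              exact this
            apply hcomm
            rw [this, smul_mul_assoc, mul_smul_comm]
          have hcc : X1 * X2 + X2 * X1 = c • 1 := by rw [← hS0]; exact hc
          have h5 : X2 * X1 = c • 1 - X1 * X2 := by rw [← hcc]; abel
          have hac : X1 * C = -(C * X1) := by
            have hsum : X1 * C + C * X1 = 0 := by
              rw [hCdef]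
              simp only [mul_sub, sub_mul, mul_smul_comm, smul_mul_assoc, hs1, hs2]
              rw [h5]
              module
            exact eq_neg_of_add_eq_zero_left hsum
          have hC2 : C * C = (1 - c ^ 2 / 4) • 1 := by
            rw [hCdef]
            simp only [mul_sub, sub_mul, mul_smul_comm, smul_mul_assoc, hs1, hs2]
            rw [h5]
            module
          obtain ⟨S, hSs, hSns, hSX1, hSC⟩ :=
            anticomm_case hn X1 C h1 hCs hs1 _ hC2 hC0 hac
          refine ⟨S, hSs, hSns, hSX1, ?_⟩
          have hX2C : X2 = C + (c / 2) • X1 := by rw [hCdef]; abel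
          rw [hX2C, mul_add, add_mul, hSC, smul_mul_assoc, mul_smul_comm, hSX1]
      · exact ⟨S0, hS0symm, fun c hc => hS0s ⟨c, hc⟩, hS0c1, hS0c2⟩
end
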